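/- Let X be an ℝ^p-valued random vector and Y a non-degenerate real-valued random variable on a common probability space, and suppose the distribution functions of X and of Y are continuous. Then ξ(Y|X) = 6 · ∫_ℝ ψ_{Y|X}(y,y) dP^Y(y) − 2, where ψ_{Y|X}(y,y') := ∫_Ω E[1_{{Y ≤ y}} | X] · E[1_{{Y ≤ y'}} | X] dP. -/

import Mathlib

open MeasureTheory ProbabilityTheory

/-- Azadkia–Chatterjee's rank correlation `ξ(Y | m)` of a real random variable `Y`
given a sub-σ-algebra `m`. -/
noncomputable def xiSigma {Ω : Type*} (m : MeasurableSpace Ω) [MeasurableSpace Ω]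
    (P : Measure Ω) (Y : Ω → ℝ) : ℝ :=
  (∫ y, variance (P[Set.indicator {ω | y ≤ Y ω} (fun _ => (1 : ℝ)) | m]) P ∂(P.map Y)) /
  (∫ y, variance (Set.indicator {ω | y ≤ Y ω} (fun _ => (1 : ℝ))) P ∂(P.map Y))

/-- Azadkia–Chatterjee's rank correlation `ξ(Y | X)`: conditioning on the σ-algebra
generated by the random vector `X`. -/
noncomputable def xi {Ω α : Type*} [MeasurableSpace Ω] [MeasurableSpace α]
    (P : Measure Ω) (Y : Ω → ℝ) (X : Ω → α) : ℝ :=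
  xiSigma (MeasurableSpace.comap X inferInstance) P Y

/-- The σ-algebra generated by the response variables with index `< i`,
i.e. by `(Y_1, …, Y_{i-1})`; for `i = 0` it is the trivial σ-algebra `⊥`,
so that `xiSigma (sigmaPast Y 0) P (Y 0) = ξ(Y_1 | ∅) = 0`. -/
def sigmaPast {Ω : Type*} {q : ℕ} (Y : Fin q → Ω → ℝ) (i : Fin q) :
    MeasurableSpace Ω :=
  ⨆ j : Fin q, ⨆ _ : j < i, MeasurableSpace.comap (Y j) inferInstance

/-- The extension `T(Y | X)` of Azadkia–Chatterjee's rank correlation to a vector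
`Y = (Y_1, …, Y_q)` of response variables, given the predictor vector `X`:
`T(Y|X) = 1 − (q − ∑_i ξ(Y_i | (X,Y_{i−1},…,Y_1))) / (q − ∑_i ξ(Y_i | (Y_{i−1},…,Y_1)))`. -/
noncomputable def T {Ω α : Type*} [MeasurableSpace Ω] [MeasurableSpace α]
    (P : Measure Ω) {q : ℕ} (Y : Fin q → Ω → ℝ) (X : Ω → α) : ℝ :=
  1 - ((q : ℝ) - ∑ i, xiSigma (MeasurableSpace.comap X inferInstance ⊔ sigmaPast Y i) P (Y i)) /
      ((q : ℝ) - ∑ i, xiSigma (sigmaPast Y i) P (Y i))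

/-- A real random variable is non-degenerate if it is not almost surely constant. -/
def Nondegenerate {Ω : Type*} [MeasurableSpace Ω] (P : Measure Ω) (Y : Ω → ℝ) : Prop :=
  ¬ ∃ c : ℝ, ∀ᵐ ω ∂P, Y ω = c

/-- The integral transform `ψ_{Y|X}(y,y') = ∫_Ω E[1_{Y ≤ y} | X] · E[1_{Y ≤ y'} | X] dP`. -/
noncomputable def psi {Ω α : Type*} [MeasurableSpace Ω] [MeasurableSpace α]
    (P : Measure Ω) (Y : Ω → ℝ) (X : Ω → α) (y y' : ℝ) : ℝ :=
  ∫ ω,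
    (MeasureTheory.condExp (MeasurableSpace.comap X inferInstance) P
        (Set.indicator {ω' | Y ω' ≤ y} (fun _ => (1 : ℝ))) ω) *
    (MeasureTheory.condExp (MeasurableSpace.comap X inferInstance) P
        (Set.indicator {ω' | Y ω' ≤ y'} (fun _ => (1 : ℝ))) ω) ∂P

open Set Filter Topology
open scoped ENNReal NNReal

namespace XiAux

variable {μ : Measure ℝ} [IsProbabilityMeasure μ]

lemma F_mono (μ : Measure ℝ) [IsProbabilityMeasure μ] :
    Monotone (fun y => (μ (Iic y)).toReal) := fun a b hab =>
  ENNReal.toReal_mono (measure_ne_top μ _) (measure_mono (Iic_subset_Iic.2 hab))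

lemma F_nonneg (μ : Measure ℝ) (y : ℝ) : 0 ≤ (μ (Iic y)).toReal := ENNReal.toReal_nonneg

lemma F_le_one (μ : Measure ℝ) [IsProbabilityMeasure μ] (y : ℝ) :
    (μ (Iic y)).toReal ≤ 1 := by
  rw [show (1:ℝ) = (1:ℝ≥0∞).toReal by simp]
  exact ENNReal.toReal_mono ENNReal.one_ne_top prob_le_one

lemma exists_F_lt {t : ℝ} (ht : 0 < t) : ∃ y : ℝ, (μ (Iic y)).toReal < t := by
  have hI : ⋂ n : ℕ, Iic (-(n:ℝ)) = ∅ := by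
    ext z
    simp only [mem_iInter, mem_Iic, mem_empty_iff_false, iff_false, not_forall, not_le]
    obtain ⟨n, hn⟩ := exists_nat_gt (-z)
    exact ⟨n, by linarith⟩
  have h1 : Tendsto (fun n : ℕ => μ (Iic (-(n:ℝ)))) atTop (𝓝 0) := by
    have := tendsto_measure_iInter_atTop (μ := μ) (s := fun n : ℕ => Iic (-(n:ℝ)))
      (fun n => measurableSet_Iic.nullMeasurableSet)
      (fun a b hab => Iic_subset_Iic.2 (by exact_mod_cast neg_le_neg (by exact_mod_cast hab)))
      ⟨0, measure_ne_top μ _⟩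
    rwa [hI, measure_empty] at this
  have h2 : Tendsto (fun n : ℕ => (μ (Iic (-(n:ℝ)))).toReal) atTop (𝓝 0) := by
    have := (ENNReal.tendsto_toReal (by simp : (0:ℝ≥0∞) ≠ ⊤)).comp h1
    simpa [Function.comp_def] using this
  obtain ⟨n, hn⟩ := (h2.eventually (eventually_lt_nhds ht)).exists
  exact ⟨-(n:ℝ), hn⟩

lemma exists_lt_F {t : ℝ} (ht : t < 1) : ∃ y : ℝ, t < (μ (Iic y)).toReal := by
  have h1 : Tendsto (fun x : ℝ => μ (Iic x)) atTop (𝓝 (μ univ)) := tendsto_measure_Iic_atTop μ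
  have h2 : Tendsto (fun x : ℝ => (μ (Iic x)).toReal) atTop (𝓝 1) := by
    have := (ENNReal.tendsto_toReal (measure_ne_top μ univ)).comp h1
    simpa [measure_univ, Function.comp_def] using this
  exact (h2.eventually (eventually_gt_nhds ht)).exists

lemma singleton_null (hF : Continuous fun y => (μ (Iic y)).toReal) (y : ℝ) : μ {y} = 0 := by
  set F : ℝ → ℝ := fun y => (μ (Iic y)).toReal with hFdef
  have key : ∀ x, x < y → (μ {y}).toReal ≤ F y - F x := by
    intro x hx
    have hsub : ({y} : Set ℝ) ∪ Iic x ⊆ Iic y := by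
      intro z hz
      rcases hz with h | h
      · rw [mem_singleton_iff] at h; exact h.le
      · exact (mem_Iic.1 h).trans hx.le
    have hdisj : Disjoint ({y} : Set ℝ) (Iic x) := by
      rw [Set.disjoint_left]
      intro z hz hz'
      rw [mem_singleton_iff] at hz
      rw [mem_Iic] at hz'
      exact absurd (hz ▸ hz') (not_le.2 hx)
    have hle : μ {y} + μ (Iic x) ≤ μ (Iic y) := by
      rw [← measure_union hdisj measurableSet_Iic]
      exact measure_mono hsub
    have := ENNReal.toReal_mono (measure_ne_top μ _) hle
    rw [ENNReal.toReal_add (measure_ne_top μ _) (measure_ne_top μ _)] at this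
    linarith [this]
  have hseq : Tendsto (fun n : ℕ => F y - F (y - 1/(n+1))) atTop (𝓝 (F y - F y)) := by
    refine Tendsto.const_sub _ (hF.continuousAt.tendsto.comp ?_)
    have : Tendsto (fun n : ℕ => y - 1/((n:ℝ)+1)) atTop (𝓝 (y - 0)) :=
      tendsto_const_nhds.sub tendsto_one_div_add_atTop_nhds_zero_nat
    simpa using this
  rw [sub_self] at hseq
  have hle0 : (μ {y}).toReal ≤ 0 :=
    ge_of_tendsto' hseq fun n => key _ (by
      have h0 : (0:ℝ) < 1/((n:ℝ)+1) := by positivity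
      linarith)
  have h0 : (μ {y}).toReal = 0 := le_antisymm hle0 ENNReal.toReal_nonneg
  exact ((ENNReal.toReal_eq_zero_iff _).1 h0).resolve_right (measure_ne_top μ _)


lemma F_level_measure (hF : Continuous fun y => (μ (Iic y)).toReal) {t : ℝ}
    (ht0 : 0 ≤ t) (ht1 : t < 1) :
    μ {y | (μ (Iic y)).toReal ≤ t} = ENNReal.ofReal t := by
  set F : ℝ → ℝ := fun y => (μ (Iic y)).toReal with hFdef
  set S : Set ℝ := {y | F y ≤ t} with hSdef
  have hSclosed : IsClosed S := isClosed_le hF continuous_const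
  obtain ⟨b, hb⟩ := exists_lt_F (μ := μ) ht1
  have hbdd : BddAbove S := ⟨b, fun z hz => by
    by_contra h
    push_neg at h
    exact absurd (lt_of_lt_of_le hb ((F_mono μ) h.le)) (not_lt.2 hz)⟩
  rcases eq_empty_or_nonempty S with hS | hS
  · have ht : t = 0 := by
      by_contra h
      have h0 : 0 < t := lt_of_le_of_ne ht0 (Ne.symm h)
      obtain ⟨y, hy⟩ := exists_F_lt (μ := μ) h0
      have hyS : y ∈ S := mem_setOf.2 hy.le
      rw [hS] at hyS
      exact hyS
    rw [hS, ht]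
    simp
  · set a := sSup S with hadef
    have haS : a ∈ S := hSclosed.csSup_mem hS hbdd
    have hFa : F a = t := by
      refine le_antisymm haS ?_
      by_contra hlt
      push_neg at hlt
      have hcont : Tendsto F (𝓝 a) (𝓝 (F a)) := hF.continuousAt
      have hev : ∀ᶠ x in 𝓝[>] a, F x < t :=
        (hcont.eventually_lt_const hlt).filter_mono nhdsWithin_le_nhds
      obtain ⟨x, hxF, hxa⟩ := (hev.and eventually_mem_nhdsWithin).exists
      exact absurd (le_csSup hbdd (mem_setOf.2 hxF.le)) (not_le.2 hxa)
    have hSIic : S = Iic a := by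
      ext z
      constructor
      · intro hz; exact le_csSup hbdd hz
      · intro hz; exact mem_setOf.2 (le_trans ((F_mono μ) hz) (le_of_eq hFa))
    rw [hSIic, ← hFa]
    exact (ENNReal.ofReal_toReal (measure_ne_top μ _)).symm

lemma map_F (hF : Continuous fun y => (μ (Iic y)).toReal) :
    μ.map (fun y => (μ (Iic y)).toReal) = volume.restrict (Ioc (0:ℝ) 1) := by
  refine Measure.ext_of_Iic _ _ (fun t => ?_)
  rw [Measure.map_apply hF.measurable measurableSet_Iic,
      Measure.restrict_apply' measurableSet_Ioc]
  have hpre : (fun y => (μ (Iic y)).toReal) ⁻¹' Iic t = {y | (μ (Iic y)).toReal ≤ t} := rfl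
  rw [hpre]
  rcases lt_or_ge t 0 with ht | ht
  · have h1 : {y | (μ (Iic y)).toReal ≤ t} = ∅ := by
      ext y
      simp only [mem_setOf_eq, mem_empty_iff_false, iff_false, not_le]
      exact lt_of_lt_of_le ht (F_nonneg μ y)
    have h2 : Iic t ∩ Ioc (0:ℝ) 1 = ∅ :=
      eq_empty_iff_forall_notMem.2 (fun z hz => by
        obtain ⟨h1, h2, h3⟩ := hz
        rw [mem_Iic] at h1
        linarith)
    rw [h1, h2]
    simp
  rcases lt_or_ge t 1 with ht1 | ht1
  · rw [F_level_measure hF ht ht1]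
    have h2 : Iic t ∩ Ioc (0:ℝ) 1 = Ioc 0 t := by
      ext z
      simp only [mem_inter_iff, mem_Iic, mem_Ioc]
      constructor
      · rintro ⟨h1, h2, h3⟩; exact ⟨h2, h1⟩
      · rintro ⟨h1, h2⟩; exact ⟨h2, h1, le_trans h2 ht1.le⟩
    rw [h2, Real.volume_Ioc]
    simp
  · have h1 : {y | (μ (Iic y)).toReal ≤ t} = univ := by
      ext y
      simp only [mem_setOf_eq, mem_univ, iff_true]
      exact le_trans (F_le_one μ y) ht1
    have h2 : Iic t ∩ Ioc (0:ℝ) 1 = Ioc 0 1 := by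
      refine inter_eq_right.2 (fun z hz => ?_)
      exact mem_Iic.2 (le_trans hz.2 ht1)
    rw [h1, h2, measure_univ, Real.volume_Ioc]
    simp

lemma integral_F_pow (hF : Continuous fun y => (μ (Iic y)).toReal) (n : ℕ) :
    ∫ y, ((μ (Iic y)).toReal)^n ∂μ = 1/((n:ℝ)+1) := by
  have h1 : ∫ y, ((μ (Iic y)).toReal)^n ∂μ
      = ∫ t, t^n ∂(μ.map (fun y => (μ (Iic y)).toReal)) :=
    (integral_map hF.measurable.aemeasurable (continuous_pow n).aestronglyMeasurable).symm
  rw [h1, map_F hF]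
  have h2 : ∫ t, t^n ∂(volume.restrict (Ioc (0:ℝ) 1)) = ∫ t in (0:ℝ)..1, t^n :=
    (intervalIntegral.integral_of_le zero_le_one).symm
  rw [h2, integral_pow]
  simp

end XiAux

lemma variance_congr_ae {Ω : Type*} [MeasurableSpace Ω] {P : Measure Ω} {f g : Ω → ℝ}
    (h : f =ᵐ[P] g) : variance f P = variance g P := by
  have hmean : ∫ a, f a ∂P = ∫ a, g a ∂P := integral_congr_ae h
  unfold ProbabilityTheory.variance ProbabilityTheory.evariance
  rw [hmean]
  refine congrArg ENNReal.toReal (lintegral_congr_ae ?_)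
  filter_upwards [h] with ω hω
  simp only [hω]

lemma variance_one_sub {Ω : Type*} [MeasurableSpace Ω] {P : Measure Ω}
    [IsProbabilityMeasure P] {f : Ω → ℝ} (hf : MeasureTheory.MemLp f 2 P) :
    variance (fun ω => 1 - f ω) P = (∫ ω, f ω * f ω ∂P) - (∫ ω, f ω ∂P)^2 := by
  set h : Ω → ℝ := (fun _ => (1:ℝ)) - f with hh
  have h2 : MeasureTheory.MemLp h 2 P := (memLp_const 1).sub hf
  have hvar : variance (fun ω => 1 - f ω) P = variance h P := rfl
  rw [hvar, variance_eq_sub h2]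
  have hint : Integrable f P := hf.integrable one_le_two
  have hsq : Integrable (fun ω => f ω ^ 2) P := hf.integrable_sq
  have hA : Integrable (fun ω => (1:ℝ) - 2 * f ω) P := by
    exact (integrable_const 1).sub (hint.const_mul 2)
  have hB : Integrable (fun ω => (2:ℝ) * f ω) P := hint.const_mul 2
  have e1 : ∫ ω, (h ^ 2) ω ∂P = 1 - 2 * ∫ ω, f ω ∂P + ∫ ω, f ω ^ 2 ∂P := by
    have hpt : ∀ ω, (h ^ 2) ω = (1 - 2 * f ω) + f ω ^ 2 := fun ω => by
      simp only [hh, Pi.pow_apply, Pi.sub_apply]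
      ring
    rw [integral_congr_ae (Filter.Eventually.of_forall hpt), integral_add hA hsq,
      integral_sub (integrable_const 1) hB, integral_const]
    simp [measure_univ, MeasureTheory.integral_const_mul]
  have e2 : ∫ ω, h ω ∂P = 1 - ∫ ω, f ω ∂P := by
    have hpt : ∀ ω, h ω = 1 - f ω := fun ω => rfl
    rw [integral_congr_ae (Filter.Eventually.of_forall hpt),
      integral_sub (integrable_const 1) hint, integral_const]
    simp [measure_univ]
  have e3 : ∫ ω, f ω * f ω ∂P = ∫ ω, f ω ^ 2 ∂P := by
    congr 1
    funext ω
    ring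
  rw [e1, e2, e3]
  ring

lemma XiAux.key {Ω : Type*} {m : MeasurableSpace Ω} [mΩ : MeasurableSpace Ω] (hm : m ≤ mΩ)
    (P : Measure Ω) [IsProbabilityMeasure P] (Y : Ω → ℝ) (hY : Measurable Y)
    (hFY : Continuous (fun y : ℝ => (P {ω | Y ω ≤ y}).toReal)) :
    xiSigma m P Y =
      6 * (∫ y, (∫ ω, (P[Set.indicator {ω' | Y ω' ≤ y} (fun _ => (1 : ℝ)) | m]) ω *
        (P[Set.indicator {ω' | Y ω' ≤ y} (fun _ => (1 : ℝ)) | m]) ω ∂P) ∂(P.map Y)) - 2 := by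
  classical
  haveI : SigmaFinite (P.trim hm) := inferInstance
  set μ : Measure ℝ := P.map Y with hmudef
  haveI : IsProbabilityMeasure μ := Measure.isProbabilityMeasure_map hY.aemeasurable
  have hIic : ∀ y, μ (Iic y) = P {ω | Y ω ≤ y} := fun y => by
    rw [hmudef, Measure.map_apply hY measurableSet_Iic]
    rfl
  set F : ℝ → ℝ := fun y => (μ (Iic y)).toReal with hFdef
  have hFeq : F = fun y => (P {ω | Y ω ≤ y}).toReal := funext fun y => by
    show (μ (Iic y)).toReal = _
    rw [hIic y]
  have hFc : Continuous F := hFeq ▸ hFY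
  have hPsing : ∀ y, P {ω | Y ω = y} = 0 := fun y => by
    have h1 : P (Y ⁻¹' {y}) = μ {y} := (Measure.map_apply hY (measurableSet_singleton y)).symm
    have h2 : {ω | Y ω = y} = Y ⁻¹' {y} := rfl
    rw [h2, h1, XiAux.singleton_null hFc]
  -- indicators of lower sets and their conditional expectations
  set g : ℝ → Ω → ℝ := fun y => Set.indicator {ω' | Y ω' ≤ y} (fun _ => (1:ℝ)) with hgdef
  have hgs : ∀ y : ℝ, MeasurableSet {ω' | Y ω' ≤ y} := fun y =>
    measurableSet_le hY measurable_const
  have hgint : ∀ y, Integrable (g y) P := fun y => (integrable_const 1).indicator (hgs y)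
  have hg0 : ∀ y ω, (0:ℝ) ≤ g y ω := fun y ω =>
    Set.indicator_nonneg (fun _ _ => zero_le_one) ω
  have hg1 : ∀ y ω, g y ω ≤ 1 := fun y ω => by
    by_cases h : ω ∈ {ω' | Y ω' ≤ y} <;> simp [hgdef, Set.indicator_apply, h]
  set G : ℝ → Ω → ℝ := fun y => P[g y | m] with hGdef
  have hGsm : ∀ y, AEStronglyMeasurable (G y) P := fun y =>
    (stronglyMeasurable_condExp.mono hm).aestronglyMeasurable
  have hG0 : ∀ y, (0:Ω → ℝ) ≤ᵐ[P] G y := fun y =>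
    condExp_nonneg (Filter.Eventually.of_forall (hg0 y))
  have hG1 : ∀ y, G y ≤ᵐ[P] fun _ => (1:ℝ) := fun y => by
    have h := condExp_mono (μ := P) (m := m) (hgint y) (integrable_const (1:ℝ))
      (Filter.Eventually.of_forall (hg1 y))
    rwa [condExp_const hm] at h
  have hG2 : ∀ y, MeasureTheory.MemLp (G y) 2 P := fun y =>
    MeasureTheory.MemLp.of_bound (hGsm y) 1 (by
      filter_upwards [hG0 y, hG1 y] with ω h0 h1
      simp only [Pi.zero_apply] at h0
      rw [Real.norm_eq_abs, abs_le]
      exact ⟨by linarith, h1⟩)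
  have hGint : ∀ y, Integrable (G y) P := fun y => (hG2 y).integrable one_le_two
  have hGGint : ∀ y, Integrable (fun ω => G y ω * G y ω) P := fun y => by
    have h := (hG2 y).integrable_sq
    simpa [pow_two] using h
  have hGmean : ∀ y, ∫ ω, G y ω ∂P = F y := fun y => by
    have h1 : ∫ ω, G y ω ∂P = ∫ ω, g y ω ∂P := integral_condExp hm (f := g y)
    rw [h1, hgdef]
    rw [MeasureTheory.integral_indicator_const (1:ℝ) (hgs y)]
    rw [hFeq]
    simp
    rfl
  -- numerator pointwise
  have hnum : ∀ y, variance (P[Set.indicator {ω | y ≤ Y ω} (fun _ => (1:ℝ)) | m]) P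
      = (∫ ω, G y ω * G y ω ∂P) - (F y)^2 := by
    intro y
    have hne : ∀ᵐ ω ∂P, Y ω ≠ y := by
      rw [ae_iff]
      simp only [ne_eq, not_not]
      exact hPsing y
    have hae : Set.indicator {ω | y ≤ Y ω} (fun _ => (1:ℝ)) =ᵐ[P] fun ω => 1 - g y ω := by
      filter_upwards [hne] with ω hω
      rcases lt_or_gt_of_ne hω with h | h
      · have h1 : ω ∉ {ω' | y ≤ Y ω'} := by
          simp only [mem_setOf_eq, not_le]
          exact h
        have h2 : ω ∈ {ω' | Y ω' ≤ y} := le_of_lt h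
        rw [Set.indicator_of_notMem h1]
        simp [hgdef, Set.indicator_of_mem h2]
      · have h1 : ω ∈ {ω' | y ≤ Y ω'} := le_of_lt h
        have h2 : ω ∉ {ω' | Y ω' ≤ y} := by
          simp only [mem_setOf_eq, not_le]
          exact h
        rw [Set.indicator_of_mem h1]
        simp [hgdef, Set.indicator_of_notMem h2]
    have hc : (P[Set.indicator {ω | y ≤ Y ω} (fun _ => (1:ℝ)) | m]) =ᵐ[P] fun ω => 1 - G y ω := by
      refine (condExp_congr_ae hae).trans ?_
      have hsplit : (fun ω => 1 - g y ω) = ((fun _ => (1:ℝ)) - g y) := rfl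
      rw [hsplit]
      refine (condExp_sub (integrable_const 1) (hgint y) m).trans ?_
      rw [condExp_const hm]
      exact Filter.EventuallyEq.rfl
    rw [variance_congr_ae hc, variance_one_sub (hG2 y), hGmean y]
  -- denominator pointwise
  have hden : ∀ y, variance (Set.indicator {ω | y ≤ Y ω} (fun _ => (1:ℝ))) P
      = F y - (F y)^2 := by
    intro y
    set f : Ω → ℝ := Set.indicator {ω | y ≤ Y ω} (fun _ => (1:ℝ)) with hfdef
    have hfs : MeasurableSet {ω | y ≤ Y ω} := measurableSet_le measurable_const hY
    have hfint : Integrable f P := (integrable_const 1).indicator hfs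
    have hf2 : MeasureTheory.MemLp f 2 P :=
      MeasureTheory.MemLp.of_bound hfint.aestronglyMeasurable 1
        (Filter.Eventually.of_forall fun ω => by
          rw [hfdef, Real.norm_eq_abs]
          by_cases h : ω ∈ {ω' | y ≤ Y ω'} <;> simp [Set.indicator_apply, h])
    have hplt : P {ω | Y ω < y} = P {ω | Y ω ≤ y} := by
      apply le_antisymm (measure_mono fun ω (h : Y ω < y) => le_of_lt h)
      calc P {ω | Y ω ≤ y} ≤ P ({ω | Y ω < y} ∪ {ω | Y ω = y}) :=
            measure_mono (fun ω (h : Y ω ≤ y) => lt_or_eq_of_le h)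
        _ ≤ P {ω | Y ω < y} + P {ω | Y ω = y} := measure_union_le _ _
        _ = P {ω | Y ω < y} := by rw [hPsing y, add_zero]
    have hp : (P {ω | y ≤ Y ω}).toReal = 1 - F y := by
      have hc : {ω | y ≤ Y ω} = {ω | Y ω < y}ᶜ := by
        ext ω
        simp [not_lt]
      rw [hc, measure_compl (measurableSet_lt hY measurable_const) (measure_ne_top P _),
        measure_univ, hplt, ENNReal.toReal_sub_of_le prob_le_one ENNReal.one_ne_top]
      rw [hFeq]
      simp
    rw [variance_eq_sub hf2]
    have hfsq : f ^ 2 = f := by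
      funext ω
      rw [hfdef]
      by_cases h : ω ∈ {ω' | y ≤ Y ω'} <;> simp [Set.indicator_apply, h]
    have hfm : ∫ ω, f ω ∂P = 1 - F y := by
      rw [hfdef, MeasureTheory.integral_indicator_const (1:ℝ) hfs, smul_eq_mul, mul_one, measureReal_def, hp]
    rw [hfsq, hfm]
    ring
  -- monotonicity and integrability of y ↦ ψ(y,y)
  have hGmono : ∀ {y y' : ℝ}, y ≤ y' → G y ≤ᵐ[P] G y' := fun {y y'} h =>
    condExp_mono (hgint y) (hgint y') (Filter.Eventually.of_forall fun ω => by
      rw [hgdef]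
      exact Set.indicator_le_indicator_of_subset
        (fun ω' (hh : Y ω' ≤ y) => le_trans hh h) (fun _ => zero_le_one) ω)
  have hψmono : Monotone (fun y => ∫ ω, G y ω * G y ω ∂P) := fun y y' h => by
    simp only
    refine integral_mono_ae (hGGint y) (hGGint y') ?_
    filter_upwards [hGmono h, hG0 y, hG0 y'] with ω h1 h0 h0'
    simp only [Pi.zero_apply] at h0 h0'
    exact mul_le_mul h1 h1 h0 h0'
  have hψ0 : ∀ y, 0 ≤ ∫ ω, G y ω * G y ω ∂P := fun y =>
    integral_nonneg fun ω => mul_self_nonneg _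
  have hψ1 : ∀ y, (∫ ω, G y ω * G y ω ∂P) ≤ 1 := fun y => by
    have hb : (fun ω => G y ω * G y ω) ≤ᵐ[P] fun _ => (1:ℝ) := by
      filter_upwards [hG0 y, hG1 y] with ω h0 h1
      simp only [Pi.zero_apply] at h0
      calc G y ω * G y ω ≤ 1 * 1 := mul_le_mul h1 h1 h0 zero_le_one
        _ = 1 := mul_one 1
    have h := integral_mono_ae (hGGint y) (integrable_const 1) hb
    simpa using h
  have hψint : Integrable (fun y => ∫ ω, G y ω * G y ω ∂P) μ := by
    refine ⟨(hψmono.measurable).aestronglyMeasurable, ?_⟩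
    apply MeasureTheory.HasFiniteIntegral.of_bounded (C := (1:ℝ))
    filter_upwards with y
    rw [Real.norm_eq_abs, abs_le]
    exact ⟨by linarith [hψ0 y], hψ1 y⟩
  have hF1int : Integrable (fun y => F y) μ :=
    ⟨(hFc.measurable).aestronglyMeasurable,
      MeasureTheory.HasFiniteIntegral.of_bounded (C := (1:ℝ))
        (Filter.Eventually.of_forall fun y => by
          rw [Real.norm_eq_abs, abs_le]
          exact ⟨by linarith [XiAux.F_nonneg μ y], XiAux.F_le_one μ y⟩)⟩
  have hF2int : Integrable (fun y => (F y)^2) μ :=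
    ⟨((hFc.pow 2).measurable).aestronglyMeasurable,
      MeasureTheory.HasFiniteIntegral.of_bounded (C := (1:ℝ))
        (Filter.Eventually.of_forall fun y => by
          rw [Real.norm_eq_abs, abs_le]
          constructor
          · nlinarith [sq_nonneg (F y)]
          · exact pow_le_one₀ (XiAux.F_nonneg μ y) (XiAux.F_le_one μ y))⟩
  -- the two integrals
  have hc1 : ∫ y, F y ∂μ = 1/2 := by
    have h := XiAux.integral_F_pow hFc 1
    simp only [pow_one, Nat.cast_one] at h
    rw [hFdef]
    rw [h]
    norm_num
  have hc2 : ∫ y, (F y)^2 ∂μ = 1/3 := by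
    have h := XiAux.integral_F_pow hFc 2
    rw [hFdef]
    rw [h]
    norm_num
  have hnum_int : ∫ y, variance (P[Set.indicator {ω | y ≤ Y ω} (fun _ => (1:ℝ)) | m]) P ∂μ
      = (∫ y, (∫ ω, G y ω * G y ω ∂P) ∂μ) - 1/3 := by
    rw [integral_congr_ae (Filter.Eventually.of_forall hnum),
      integral_sub hψint hF2int, hc2]
  have hden_int : ∫ y, variance (Set.indicator {ω | y ≤ Y ω} (fun _ => (1:ℝ))) P ∂μ
      = 1/6 := by
    rw [integral_congr_ae (Filter.Eventually.of_forall hden),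
      integral_sub hF1int hF2int, hc1, hc2]
    norm_num
  show xiSigma m P Y
      = 6 * (∫ y, (∫ ω, G y ω * G y ω ∂P) ∂μ) - 2
  unfold xiSigma
  rw [← hmudef, hnum_int, hden_int, div_eq_iff (by norm_num : (1/6 : ℝ) ≠ 0)]
  ring


theorem xi_copula_representation_of_continuous
    {Ω : Type*} [MeasurableSpace Ω] (P : Measure Ω) [IsProbabilityMeasure P]
    {p : ℕ} (X : Ω → (Fin p → ℝ)) (Y : Ω → ℝ)
    (hX : Measurable X) (hY : Measurable Y) (hnd : Nondegenerate P Y)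
    (hFX : Continuous (fun x : Fin p → ℝ => (P {ω | ∀ j, X ω j ≤ x j}).toReal))
    (hFY : Continuous (fun y : ℝ => (P {ω | Y ω ≤ y}).toReal)) :
    xi P Y X = 6 * (∫ y, psi P Y X y y ∂(P.map Y)) - 2 := by
  unfold xi
  exact XiAux.key hX.comap_le P Y hY hFY
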